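/- A bounded real sequence x = {x(n)} is almost convergent if and only if there exists a real number c such that the averages (1/n)·∑_{t=i}^{i+n−1} x(t) converge to c as n → ∞ uniformly in i; and in that case L(x) = c for every Banach limit L. -/

import Mathlib

open Filter

/-- A bounded real sequence. -/
def IsBddSeq (x : ℕ → ℝ) : Prop := ∃ C : ℝ, ∀ n, |x n| ≤ C

/-- The sup norm of a (bounded) real sequence. -/
noncomputable def supNorm (x : ℕ → ℝ) : ℝ := ⨆ n, |x n|

/-- A Banach limit: a linear functional on the space of bounded real sequences
(extended arbitrarily to all sequences) that is positive, shift-invariant,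
and sends the constant-one sequence to `1`. -/
def IsBanachLimit (L : (ℕ → ℝ) → ℝ) : Prop :=
  (∀ x y : ℕ → ℝ, IsBddSeq x → IsBddSeq y → L (x + y) = L x + L y) ∧
  (∀ (c : ℝ) (x : ℕ → ℝ), IsBddSeq x → L (c • x) = c * L x) ∧
  (∀ x : ℕ → ℝ, IsBddSeq x → (∀ n, 0 ≤ x n) → 0 ≤ L x) ∧
  (∀ x : ℕ → ℝ, IsBddSeq x → L (fun n => x (n + 1)) = L x) ∧
  L (fun _ => 1) = 1

/-- A bounded sequence is almost convergent if all Banach limits agree on it. -/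
def AlmostConvergent (x : ℕ → ℝ) : Prop :=
  ∃ c : ℝ, ∀ L : (ℕ → ℝ) → ℝ, IsBanachLimit L → L x = c

/-- `a` is a sub-limit of `x` if some subsequence of `x` converges to `a`. -/
def IsSubLimit (x : ℕ → ℝ) (a : ℝ) : Prop :=
  ∃ n : ℕ → ℕ, StrictMono n ∧ Tendsto (fun k => x (n k)) atTop (nhds a)

/-- The set of all sub-limits of `x`. -/
def subLimitSet (x : ℕ → ℝ) : Set ℝ := {a | IsSubLimit x a}

/-- `A({k : i ≤ n_k ≤ i + len - 1})`: the number of indices of the subsequence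
given by `n` falling in the window `[i, i + len - 1]`. -/
noncomputable def windowCount (n : ℕ → ℕ) (i len : ℕ) : ℕ :=
  {k : ℕ | i ≤ n k ∧ n k < i + len}.ncard

/-- Upper weight of a subsequence with index map `n`. -/
noncomputable def upperWeight (n : ℕ → ℕ) : ℝ :=
  limsup (fun len : ℕ => ⨆ i : ℕ, (windowCount n i len : ℝ) / len) atTop

/-- Lower weight of a subsequence with index map `n`. -/
noncomputable def lowerWeight (n : ℕ → ℕ) : ℝ :=
  liminf (fun len : ℕ => ⨅ i : ℕ, (windowCount n i len : ℝ) / len) atTop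

/-- `n` indexes an essential subsequence of `x` for the sub-limit `a`:
it converges to `a` and every subsequence of `x` converging to `a` has all
but finitely many of its indices among the `n k`. -/
def IsEssentialSubseq (x : ℕ → ℝ) (a : ℝ) (n : ℕ → ℕ) : Prop :=
  StrictMono n ∧ Tendsto (fun k => x (n k)) atTop (nhds a) ∧
  ∀ m : ℕ → ℕ, StrictMono m → Tendsto (fun t => x (m t)) atTop (nhds a) →
    {t : ℕ | ¬ ∃ k, n k = m t}.Finite

/-- The weight `w(a)` of a sub-limit `a` of `x` exists and equals `w`:
some essential subsequence of `a` has upper weight and lower weight both `w`. -/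
def HasSubLimitWeight (x : ℕ → ℝ) (a : ℝ) (w : ℝ) : Prop :=
  ∃ n : ℕ → ℕ, IsEssentialSubseq x a n ∧ upperWeight n = w ∧ lowerWeight n = w

/-- `A({k : x(k+i) ∈ S, k = 0, …, len-1})`. -/
noncomputable def seqCount (x : ℕ → ℝ) (S : Set ℝ) (i len : ℕ) : ℕ :=
  {k : ℕ | k < len ∧ x (k + i) ∈ S}.ncard

/-- The weight of `x` with respect to `S` exists and equals `w`:
`A({k : x(k+i) ∈ S, k = 0,…,n-1})/n → w` as `n → ∞`, uniformly in `i`. -/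
def HasSetWeight (x : ℕ → ℝ) (S : Set ℝ) (w : ℝ) : Prop :=
  ∀ ε : ℝ, 0 < ε → ∃ N : ℕ, ∀ n ≥ N, ∀ i : ℕ,
    |(seqCount x S i n : ℝ) / n - w| < ε

/-- `x` is properly distributed: every Borel subset of `[-‖x‖∞, ‖x‖∞]`
has a weight with respect to `x`. -/
def ProperlyDistributed (x : ℕ → ℝ) : Prop :=
  ∀ S : Set ℝ, MeasurableSet S → S ⊆ Set.Icc (-(supNorm x)) (supNorm x) →
    ∃ w : ℝ, HasSetWeight x S w

/-- `s` is simply distributed: it takes finitely many values, and each value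
has a weight with respect to `s`. -/
def SimplyDistributed (s : ℕ → ℝ) : Prop :=
  (Set.range s).Finite ∧ ∀ a ∈ Set.range s, ∃ w : ℝ, HasSetWeight s {a} w

namespace Lorentz

noncomputable def winSum (x : ℕ → ℝ) (n i : ℕ) : ℝ := ∑ t ∈ Finset.range n, x (i + t)

noncomputable def winSup (x : ℕ → ℝ) (n : ℕ) : ℝ := ⨆ i, winSum x n i

noncomputable def qfun (x : ℕ → ℝ) : ℝ := sInf ((fun n : ℕ => winSup x n / n) '' Set.Ici 1)

lemma abs_winSum_le {x : ℕ → ℝ} {C : ℝ} (hC : ∀ k, |x k| ≤ C) (n i : ℕ) :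
    |winSum x n i| ≤ C * n := by
  calc |winSum x n i| ≤ ∑ t ∈ Finset.range n, |x (i + t)| := Finset.abs_sum_le_sum_abs _ _
    _ ≤ ∑ _t ∈ Finset.range n, C := Finset.sum_le_sum fun t _ => hC _
    _ = C * n := by simp [mul_comm]

lemma bddAbove_winSum {x : ℕ → ℝ} {C : ℝ} (hC : ∀ k, |x k| ≤ C) (n : ℕ) :
    BddAbove (Set.range fun i => winSum x n i) := by
  refine ⟨C * n, ?_⟩
  rintro _ ⟨i, rfl⟩
  exact (abs_le.mp (abs_winSum_le hC n i)).2

lemma winSum_le_winSup {x : ℕ → ℝ} {C : ℝ} (hC : ∀ k, |x k| ≤ C) (n i : ℕ) :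
    winSum x n i ≤ winSup x n :=
  le_ciSup (bddAbove_winSum hC n) i

lemma winSup_le {x : ℕ → ℝ} {M : ℝ} (n : ℕ) (h : ∀ i, winSum x n i ≤ M) :
    winSup x n ≤ M := ciSup_le h

lemma winSum_add_index (x : ℕ → ℝ) (m n i : ℕ) :
    winSum x (m + n) i = winSum x m i + winSum x n (i + m) := by
  induction n with
  | zero => simp [winSum]
  | succ n ih =>
    have h1 : m + (n + 1) = (m + n) + 1 := by ring
    rw [h1]
    unfold winSum at *
    rw [Finset.sum_range_succ, ih, Finset.sum_range_succ, add_assoc,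
      show i + (m + n) = i + m + n from by omega]

lemma subadditive_winSup {x : ℕ → ℝ} {C : ℝ} (hC : ∀ k, |x k| ≤ C) :
    Subadditive (winSup x) := by
  intro m n
  refine winSup_le _ fun i => ?_
  rw [winSum_add_index]
  exact add_le_add (winSum_le_winSup hC m i) (winSum_le_winSup hC n (i + m))

lemma C_nonneg {x : ℕ → ℝ} {C : ℝ} (hC : ∀ k, |x k| ≤ C) : 0 ≤ C :=
  (abs_nonneg (x 0)).trans (hC 0)

lemma neg_le_winSup_div {x : ℕ → ℝ} {C : ℝ} (hC : ∀ k, |x k| ≤ C) (n : ℕ) :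
    -C ≤ winSup x n / n := by
  rcases Nat.eq_zero_or_pos n with rfl | hn
  · have : winSup x 0 = 0 := by simp [winSup, winSum]
    rw [this]
    simpa using C_nonneg hC
  · have h1 : -(C * n) ≤ winSum x n 0 := (abs_le.mp (abs_winSum_le hC n 0)).1
    have h2 : winSum x n 0 ≤ winSup x n := winSum_le_winSup hC n 0
    have hn' : (0 : ℝ) < n := by exact_mod_cast hn
    rw [le_div_iff₀ hn']
    nlinarith

lemma bddBelow_winSup_div {x : ℕ → ℝ} {C : ℝ} (hC : ∀ k, |x k| ≤ C) :
    BddBelow (Set.range fun n : ℕ => winSup x n / n) := by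
  refine ⟨-C, ?_⟩
  rintro _ ⟨n, rfl⟩
  exact neg_le_winSup_div hC n

lemma tendsto_winSup_div {x : ℕ → ℝ} {C : ℝ} (hC : ∀ k, |x k| ≤ C) :
    Tendsto (fun n : ℕ => winSup x n / n) atTop (nhds (qfun x)) := by
  have h := subadditive_winSup hC
  have he : qfun x = h.lim := by unfold qfun Subadditive.lim; rfl
  rw [he]
  exact h.tendsto_lim (bddBelow_winSup_div hC)

lemma qfun_le_div {x : ℕ → ℝ} {C : ℝ} (hC : ∀ k, |x k| ≤ C) {n : ℕ} (hn : n ≠ 0) :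
    qfun x ≤ winSup x n / n := by
  have h := subadditive_winSup hC
  have he : qfun x = h.lim := by unfold qfun Subadditive.lim; rfl
  rw [he]
  exact h.lim_le_div (bddBelow_winSup_div hC) hn

lemma abs_add_seq {x y : ℕ → ℝ} {C D : ℝ} (hC : ∀ k, |x k| ≤ C) (hD : ∀ k, |y k| ≤ D) :
    ∀ k, |(x + y) k| ≤ C + D := fun k =>
  (abs_add_le _ _).trans (add_le_add (hC k) (hD k))

lemma abs_neg_seq {x : ℕ → ℝ} {C : ℝ} (hC : ∀ k, |x k| ≤ C) :
    ∀ k, |(-x) k| ≤ C := fun k => by simpa using hC k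

lemma abs_smul_seq {x : ℕ → ℝ} {C : ℝ} (hC : ∀ k, |x k| ≤ C) (c : ℝ) :
    ∀ k, |(c • x) k| ≤ |c| * C := fun k => by
  simp only [Pi.smul_apply, smul_eq_mul, abs_mul]
  exact mul_le_mul_of_nonneg_left (hC k) (abs_nonneg c)

lemma winSum_add (x y : ℕ → ℝ) (n i : ℕ) :
    winSum (x + y) n i = winSum x n i + winSum y n i := by
  simp [winSum, Finset.sum_add_distrib]

lemma winSum_neg (x : ℕ → ℝ) (n i : ℕ) : winSum (-x) n i = -winSum x n i := by
  simp [winSum]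

lemma winSum_smul (x : ℕ → ℝ) (c : ℝ) (n i : ℕ) :
    winSum (c • x) n i = c * winSum x n i := by
  simp [winSum, Finset.mul_sum]

lemma qfun_add_le {x y : ℕ → ℝ} {C D : ℝ} (hC : ∀ k, |x k| ≤ C) (hD : ∀ k, |y k| ≤ D) :
    qfun (x + y) ≤ qfun x + qfun y := by
  refine le_of_tendsto_of_tendsto (tendsto_winSup_div (abs_add_seq hC hD))
    ((tendsto_winSup_div hC).add (tendsto_winSup_div hD)) ?_
  filter_upwards [eventually_ge_atTop 1] with n hn
  have hn' : (0 : ℝ) < n := by exact_mod_cast hn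
  have h1 : winSup (x + y) n ≤ winSup x n + winSup y n := by
    refine winSup_le _ fun i => ?_
    rw [winSum_add]
    exact add_le_add (winSum_le_winSup hC n i) (winSum_le_winSup hD n i)
  calc winSup (x + y) n / n ≤ (winSup x n + winSup y n) / n := by gcongr
    _ = winSup x n / n + winSup y n / n := add_div _ _ _

lemma winSup_smul {x : ℕ → ℝ} {c : ℝ} (hc : 0 ≤ c) (n : ℕ) :
    winSup (c • x) n = c * winSup x n := by
  unfold winSup
  rw [Real.mul_iSup_of_nonneg hc]
  simp only [winSum_smul]

lemma qfun_smul {x : ℕ → ℝ} {C : ℝ} (hC : ∀ k, |x k| ≤ C) {c : ℝ} (hc : 0 < c) :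
    qfun (c • x) = c * qfun x := by
  refine tendsto_nhds_unique (tendsto_winSup_div (abs_smul_seq hC c)) ?_
  have h := (tendsto_winSup_div hC).const_mul c
  refine h.congr fun n => ?_
  rw [winSup_smul hc.le, mul_div_assoc]

lemma qfun_nonpos {x : ℕ → ℝ} {C : ℝ} (hC : ∀ k, |x k| ≤ C) (h : ∀ k, x k ≤ 0) :
    qfun x ≤ 0 := by
  have h1 : qfun x ≤ winSup x 1 / 1 := by simpa using qfun_le_div hC one_ne_zero
  have h2 : winSup x 1 ≤ 0 := winSup_le 1 fun i => by
    simpa [winSum] using h i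
  calc qfun x ≤ winSup x 1 / 1 := h1
    _ ≤ 0 := by linarith

lemma qfun_const (c : ℝ) : qfun (fun _ => c) = c := by
  have hC : ∀ k : ℕ, |(fun _ : ℕ => c) k| ≤ |c| := fun _ => le_rfl
  refine tendsto_nhds_unique (tendsto_winSup_div hC) ?_
  have : ∀ᶠ n : ℕ in atTop, winSup (fun _ => c) n / n = c := by
    filter_upwards [eventually_ge_atTop 1] with n hn
    have hn' : (0 : ℝ) < n := by exact_mod_cast hn
    have h1 : winSup (fun _ => c) n = c * n := by
      have : ∀ i, winSum (fun _ => c) n i = c * n := fun i => by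
        simp [winSum, mul_comm]
      unfold winSup
      rw [funext this]
      exact ciSup_const
    rw [h1, mul_div_assoc, div_self hn'.ne', mul_one]
  exact Tendsto.congr' (this.mono fun n h => h.symm) tendsto_const_nhds

lemma qfun_zero : qfun (0 : ℕ → ℝ) = 0 := qfun_const 0

lemma qfun_nonpos_of_winSum_bdd {x : ℕ → ℝ} {C D : ℝ} (hC : ∀ k, |x k| ≤ C)
    (h : ∀ n i, winSum x n i ≤ D) : qfun x ≤ 0 := by
  refine le_of_tendsto_of_tendsto (tendsto_winSup_div hC)
    (tendsto_const_div_atTop_nhds_zero_nat D) ?_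
  filter_upwards [eventually_ge_atTop 1] with n hn
  have hn' : (0 : ℝ) < n := by exact_mod_cast hn
  have : winSup x n ≤ D := winSup_le n (h n)
  gcongr

lemma winSum_shift_sub (x : ℕ → ℝ) (n i : ℕ) :
    winSum ((fun j => x (j + 1)) - x) n i = x (i + n) - x i := by
  unfold winSum
  have h1 : ∀ t, ((fun j => x (j + 1)) - x) (i + t) = x (i + (t + 1)) - x (i + t) := by
    intro t
    rfl
  calc ∑ t ∈ Finset.range n, ((fun j => x (j + 1)) - x) (i + t)
      = ∑ t ∈ Finset.range n, (x (i + (t + 1)) - x (i + t)) := Finset.sum_congr rfl fun t _ => h1 t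
    _ = x (i + n) - x i := Finset.sum_range_sub (fun t => x (i + t)) n

lemma qfun_combo {x : ℕ → ℝ} {C : ℝ} (hC : ∀ k, |x k| ≤ C) :
    0 ≤ qfun x + qfun (-x) := by
  refine le_of_tendsto_of_tendsto tendsto_const_nhds
    ((tendsto_winSup_div hC).add (tendsto_winSup_div (abs_neg_seq hC))) ?_
  filter_upwards [eventually_ge_atTop 1] with n hn
  have hn' : (0 : ℝ) < n := by exact_mod_cast hn
  have h1 : winSum x n 0 ≤ winSup x n := winSum_le_winSup hC n 0
  have h2 : -winSum x n 0 ≤ winSup (-x) n := by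
    rw [← winSum_neg]
    exact winSum_le_winSup (abs_neg_seq hC) n 0
  have h3 : (0:ℝ) ≤ winSup x n + winSup (-x) n := by linarith
  rw [← add_div]
  exact div_nonneg h3 hn'.le

def bddSub : Submodule ℝ (ℕ → ℝ) where
  carrier := {x | IsBddSeq x}
  add_mem' := by
    rintro a b ⟨C, hC⟩ ⟨D, hD⟩
    exact ⟨C + D, abs_add_seq hC hD⟩
  zero_mem' := ⟨0, by simp⟩
  smul_mem' := by
    rintro c a ⟨C, hC⟩
    exact ⟨|c| * C, abs_smul_seq hC c⟩

lemma mem_bddSub {x : ℕ → ℝ} : x ∈ bddSub ↔ IsBddSeq x := Iff.rfl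

open scoped Classical in
noncomputable def extL (g : bddSub →ₗ[ℝ] ℝ) : (ℕ → ℝ) → ℝ :=
  fun z => if h : IsBddSeq z then g ⟨z, h⟩ else 0

lemma extL_apply (g : bddSub →ₗ[ℝ] ℝ) {z : ℕ → ℝ} (h : IsBddSeq z) :
    extL g z = g ⟨z, h⟩ := by
  classical
  simp [extL, h]

lemma isBddSeq_shift {x : ℕ → ℝ} (hx : IsBddSeq x) : IsBddSeq (fun n => x (n + 1)) := by
  obtain ⟨C, hC⟩ := hx
  exact ⟨C, fun n => hC (n + 1)⟩

lemma isBanachLimit_extL (g : bddSub →ₗ[ℝ] ℝ) (hg : ∀ z : bddSub, g z ≤ qfun z.val) :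
    IsBanachLimit (extL g) := by
  refine ⟨?_, ?_, ?_, ?_, ?_⟩
  · intro a b ha hb
    rw [extL_apply g ha, extL_apply g hb,
      extL_apply g (bddSub.add_mem (mem_bddSub.2 ha) (mem_bddSub.2 hb) : IsBddSeq (a + b))]
    have : (⟨a + b, _⟩ : bddSub) = ⟨a, ha⟩ + ⟨b, hb⟩ := rfl
    rw [this, map_add]
  · intro c a ha
    rw [extL_apply g ha, extL_apply g (bddSub.smul_mem c (mem_bddSub.2 ha) : IsBddSeq (c • a))]
    have : (⟨c • a, _⟩ : bddSub) = c • (⟨a, ha⟩ : bddSub) := rfl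
    rw [this, map_smul, smul_eq_mul]
  · intro a ha hpos
    obtain ⟨C, hC⟩ := ha
    rw [extL_apply g ⟨C, hC⟩]
    have h1 := hg (-(⟨a, ⟨C, hC⟩⟩ : bddSub))
    rw [map_neg] at h1
    have h2 : qfun ((-(⟨a, ⟨C, hC⟩⟩ : bddSub)) : bddSub).val ≤ 0 := by
      have : ((-(⟨a, ⟨C, hC⟩⟩ : bddSub)) : bddSub).val = -a := rfl
      rw [this]
      exact qfun_nonpos (abs_neg_seq hC) fun k => by
        simpa using hpos k
    linarith
  · intro a ha
    obtain ⟨C, hC⟩ := ha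
    rw [extL_apply g (isBddSeq_shift ⟨C, hC⟩), extL_apply g ⟨C, hC⟩]
    set aB : bddSub := ⟨a, ⟨C, hC⟩⟩
    set tB : bddSub := ⟨fun n => a (n + 1), isBddSeq_shift ⟨C, hC⟩⟩
    have hsub : ∀ n i : ℕ, winSum ((tB - aB : bddSub) : ℕ → ℝ) n i ≤ 2 * C := by
      intro n i
      have : ((tB - aB : bddSub) : ℕ → ℝ) = (fun j => a (j + 1)) - a := rfl
      rw [this, winSum_shift_sub]
      have := abs_le.1 (hC (i + n)); have := abs_le.1 (hC i); linarith [(abs_le.1 (hC (i+n))).2, (abs_le.1 (hC i)).1]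
    have hsub' : ∀ n i : ℕ, winSum ((aB - tB : bddSub) : ℕ → ℝ) n i ≤ 2 * C := by
      intro n i
      have h0 : ((aB - tB : bddSub) : ℕ → ℝ) = -((fun j => a (j + 1)) - a) := by
        have : ((aB - tB : bddSub) : ℕ → ℝ) = a - fun j => a (j + 1) := rfl
        rw [this]; ext j; simp
      rw [h0, winSum_neg, winSum_shift_sub]
      linarith [(abs_le.1 (hC (i+n))).1, (abs_le.1 (hC i)).2]
    have hCt : ∀ k, |((tB - aB : bddSub) : ℕ → ℝ) k| ≤ C + C := by
      have := (tB - aB).2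
      intro k
      have h0 : ((tB - aB : bddSub) : ℕ → ℝ) k = a (k + 1) - a k := rfl
      rw [h0]
      have := abs_sub (a (k+1)) (a k)
      calc |a (k + 1) - a k| ≤ |a (k+1)| + |a k| := abs_sub _ _
        _ ≤ C + C := add_le_add (hC _) (hC _)
    have hCt' : ∀ k, |((aB - tB : bddSub) : ℕ → ℝ) k| ≤ C + C := by
      intro k
      have h0 : ((aB - tB : bddSub) : ℕ → ℝ) k = a k - a (k + 1) := rfl
      rw [h0]
      calc |a k - a (k + 1)| ≤ |a k| + |a (k+1)| := abs_sub _ _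
        _ ≤ C + C := add_le_add (hC _) (hC _)
    have e1 : g (tB - aB) ≤ 0 :=
      (hg _).trans (qfun_nonpos_of_winSum_bdd hCt hsub)
    have e2 : g (aB - tB) ≤ 0 :=
      (hg _).trans (qfun_nonpos_of_winSum_bdd hCt' hsub')
    rw [map_sub] at e1 e2
    linarith
  · have h1 : IsBddSeq (fun _ : ℕ => (1:ℝ)) := ⟨1, fun n => by norm_num⟩
    rw [extL_apply g h1]
    set oneB : bddSub := ⟨fun _ => 1, h1⟩
    have e1 : g oneB ≤ 1 := by
      have := hg oneB
      rwa [show (oneB : ℕ → ℝ) = fun _ => (1:ℝ) from rfl, qfun_const 1] at this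
    have e2 : g (-oneB) ≤ -1 := by
      have := hg (-oneB)
      have h0 : ((-oneB : bddSub) : ℕ → ℝ) = fun _ => (-1 : ℝ) := by ext j; simp [oneB]
      rwa [h0, qfun_const (-1)] at this
    rw [map_neg] at e2
    linarith

lemma exists_banachLimit_aux (x : ℕ → ℝ) (hx : IsBddSeq x) (hx0 : x ≠ 0) (v : ℝ)
    (h1 : v ≤ qfun x) (h2 : -qfun (-x) ≤ v) :
    ∃ L : (ℕ → ℝ) → ℝ, IsBanachLimit L ∧ L x = v := by
  obtain ⟨C, hC⟩ := hx
  set xB : bddSub := ⟨x, ⟨C, hC⟩⟩ with hxB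
  have hxB0 : xB ≠ 0 := fun h => hx0 (congrArg Subtype.val h)
  have hNhom : ∀ c : ℝ, 0 < c → ∀ z : bddSub, qfun ((c • z : bddSub) : ℕ → ℝ) = c * qfun (z : ℕ → ℝ) := by
    intro c hc z
    obtain ⟨D, hD⟩ := z.2
    have : ((c • z : bddSub) : ℕ → ℝ) = c • (z : ℕ → ℝ) := rfl
    rw [this, qfun_smul hD hc]
  have hNadd : ∀ z w : bddSub, qfun ((z + w : bddSub) : ℕ → ℝ) ≤ qfun (z : ℕ → ℝ) + qfun (w : ℕ → ℝ) := by
    intro z w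
    obtain ⟨D, hD⟩ := z.2
    obtain ⟨E, hE⟩ := w.2
    have : ((z + w : bddSub) : ℕ → ℝ) = (z : ℕ → ℝ) + (w : ℕ → ℝ) := rfl
    rw [this]
    exact qfun_add_le hD hE
  have hf : ∀ p : (LinearPMap.mkSpanSingleton (K := ℝ) (L := ℝ) (σ := RingHom.id ℝ) xB v hxB0).domain,
      (LinearPMap.mkSpanSingleton (K := ℝ) (L := ℝ) (σ := RingHom.id ℝ) xB v hxB0) p ≤ qfun ((p : bddSub) : ℕ → ℝ) := by
    rintro ⟨p, hp⟩
    obtain ⟨c, hc⟩ := Submodule.mem_span_singleton.1 hp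
    subst hc
    have happ : (LinearPMap.mkSpanSingleton (K := ℝ) (L := ℝ) (σ := RingHom.id ℝ) xB v hxB0) ⟨c • xB, hp⟩ = c • v :=
      LinearPMap.mkSpanSingleton'_apply xB v _ c hp
    rw [happ]
    have hval : ((c • xB : bddSub) : ℕ → ℝ) = c • x := rfl
    rcases lt_trichotomy c 0 with hc0 | hc0 | hc0
    · have hval2 : ((c • xB : bddSub) : ℕ → ℝ) = (-c) • (-x) := by
        rw [hval]; ext k; simp
      rw [hval2, qfun_smul (abs_neg_seq hC) (by linarith : (0:ℝ) < -c)]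
      have : -v ≤ qfun (-x) := by linarith
      have := mul_le_mul_of_nonneg_left this (by linarith : (0:ℝ) ≤ -c)
      simp only [smul_eq_mul]
      nlinarith
    · subst hc0
      simp only [zero_smul, smul_eq_mul, zero_mul]
      rw [show ((0 : bddSub) : ℕ → ℝ) = 0 from rfl, qfun_zero]
    · rw [hval, qfun_smul hC hc0]
      simp only [smul_eq_mul]
      nlinarith
  obtain ⟨g, hg1, hg2⟩ := exists_extension_of_le_sublinear
    (LinearPMap.mkSpanSingleton (K := ℝ) (L := ℝ) (σ := RingHom.id ℝ) xB v hxB0) (fun z : bddSub => qfun (z : ℕ → ℝ))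
    hNhom hNadd hf
  refine ⟨extL g, isBanachLimit_extL g hg2, ?_⟩
  rw [extL_apply g ⟨C, hC⟩]
  have hmem : xB ∈ Submodule.span ℝ {xB} := Submodule.mem_span_singleton_self xB
  have := hg1 ⟨xB, hmem⟩
  rw [LinearPMap.mkSpanSingleton_apply] at this
  exact this

lemma exists_banachLimit (x : ℕ → ℝ) (hx : IsBddSeq x) (v : ℝ)
    (h1 : v ≤ qfun x) (h2 : -qfun (-x) ≤ v) :
    ∃ L : (ℕ → ℝ) → ℝ, IsBanachLimit L ∧ L x = v := by
  by_cases hx0 : x = 0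
  · subst hx0
    have hq : qfun (0 : ℕ → ℝ) = 0 := qfun_zero
    have hq' : qfun (-(0 : ℕ → ℝ)) = 0 := by rw [neg_zero]; exact qfun_zero
    have hv : v = 0 := by rw [hq] at h1; rw [hq'] at h2; linarith
    subst hv
    have h1' : IsBddSeq (fun _ : ℕ => (1:ℝ)) := ⟨1, fun n => by norm_num⟩
    have hne : (fun _ : ℕ => (1:ℝ)) ≠ 0 := by
      intro h
      have := congrFun h 0
      norm_num at this
    obtain ⟨L, hL, _⟩ := exists_banachLimit_aux (fun _ => 1) h1' hne 1
      (by rw [qfun_const])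
      (by
        have : -(fun _ : ℕ => (1:ℝ)) = fun _ : ℕ => (-1:ℝ) := by ext; simp
        rw [this, qfun_const]; norm_num)
    refine ⟨L, hL, ?_⟩
    have := hL.2.1 0 (fun _ => 1) h1'
    have h0 : (0:ℝ) • (fun _ : ℕ => (1:ℝ)) = (0 : ℕ → ℝ) := by ext; simp
    rw [h0] at this
    rw [this]; ring
  · exact exists_banachLimit_aux x hx hx0 v h1 h2

lemma banachLimit_le {L : (ℕ → ℝ) → ℝ} (hL : IsBanachLimit L) {z : ℕ → ℝ} {M : ℝ}
    (hz : IsBddSeq z) (h : ∀ i, z i ≤ M) : L z ≤ M := by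
  obtain ⟨hadd, hsmul, hpos, hshift, hone⟩ := hL
  have h1 : IsBddSeq (fun _ : ℕ => (1:ℝ)) := ⟨1, fun n => by norm_num⟩
  have hM : IsBddSeq (M • fun _ : ℕ => (1:ℝ)) := ⟨|M|, fun n => by simp⟩
  have hz' : IsBddSeq ((-1 : ℝ) • z) := by
    obtain ⟨C, hC⟩ := hz
    exact ⟨C, fun n => by simpa using hC n⟩
  have key : 0 ≤ L ((M • fun _ : ℕ => (1:ℝ)) + (-1 : ℝ) • z) := by
    refine hpos _ ?_ ?_
    · obtain ⟨C, hC⟩ := hz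
      exact ⟨|M| + C, fun n => by
        simp only [Pi.add_apply, Pi.smul_apply, smul_eq_mul, mul_one, neg_one_mul]
        calc |M + -z n| ≤ |M| + |z n| := by
              simpa using abs_add_le M (-z n)
          _ ≤ |M| + C := by linarith [hC n]⟩
    · intro n
      simp only [Pi.add_apply, Pi.smul_apply, smul_eq_mul, mul_one, neg_one_mul]
      linarith [h n]
  rw [hadd _ _ hM hz', hsmul M _ h1, hsmul (-1) z hz, hone] at key
  linarith

lemma banachLimit_shifted {L : (ℕ → ℝ) → ℝ} (hL : IsBanachLimit L) {x : ℕ → ℝ}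
    (hx : IsBddSeq x) (n : ℕ) : L (fun i => x (i + n)) = L x := by
  induction n with
  | zero => simp
  | succ n ih =>
    have hy : IsBddSeq (fun j => x (j + n)) := by
      obtain ⟨C, hC⟩ := hx
      exact ⟨C, fun j => hC (j + n)⟩
    have := hL.2.2.2.1 (fun j => x (j + n)) hy
    have he : (fun i => (fun j => x (j + n)) (i + 1)) = fun i => x (i + (n + 1)) := by
      ext i
      show x (i + 1 + n) = x (i + (n + 1))
      congr 1
      omega
    rw [he] at this
    rw [this, ih]

lemma banachLimit_winSumSeq {L : (ℕ → ℝ) → ℝ} (hL : IsBanachLimit L) {x : ℕ → ℝ}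
    (hx : IsBddSeq x) (n : ℕ) : L (fun i => winSum x n i) = n * L x := by
  obtain ⟨C, hC⟩ := hx
  induction n with
  | zero =>
    have h0 : (fun i : ℕ => winSum x 0 i) = (0 : ℝ) • x := by
      ext i; simp [winSum]
    rw [h0, hL.2.1 0 x ⟨C, hC⟩]
    simp
  | succ n ih =>
    have hw : IsBddSeq (fun i => winSum x n i) := ⟨C * n, fun i => abs_winSum_le hC n i⟩
    have hsh : IsBddSeq (fun i => x (i + n)) := ⟨C, fun i => hC (i + n)⟩
    have h0 : (fun i : ℕ => winSum x (n + 1) i) =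
        (fun i => winSum x n i) + fun i => x (i + n) := by
      ext i; simp [winSum, Finset.sum_range_succ]
    rw [h0, hL.1 _ _ hw hsh, ih, banachLimit_shifted hL ⟨C, hC⟩ n]
    push_cast; ring

lemma banachLimit_le_qfun {L : (ℕ → ℝ) → ℝ} (hL : IsBanachLimit L) {x : ℕ → ℝ} {C : ℝ}
    (hC : ∀ k, |x k| ≤ C) : L x ≤ qfun x := by
  refine ge_of_tendsto (tendsto_winSup_div hC) ?_
  filter_upwards [eventually_ge_atTop 1] with n hn
  have hn' : (0 : ℝ) < n := by exact_mod_cast hn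
  have hw : IsBddSeq (fun i => winSum x n i) := ⟨C * n, fun i => abs_winSum_le hC n i⟩
  have hz : IsBddSeq ((n : ℝ)⁻¹ • fun i => winSum x n i) :=
    ⟨(n:ℝ)⁻¹ * (C * n), fun i => by
      simp only [Pi.smul_apply, smul_eq_mul, abs_mul, abs_inv, Nat.abs_cast]
      exact mul_le_mul_of_nonneg_left (abs_winSum_le hC n i) (by positivity)⟩
  have e1 : L ((n : ℝ)⁻¹ • fun i => winSum x n i) = L x := by
    rw [hL.2.1 _ _ hw, banachLimit_winSumSeq hL ⟨C, fun k => hC k⟩ n]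
    field_simp
  have e2 : L ((n : ℝ)⁻¹ • fun i => winSum x n i) ≤ winSup x n / n := by
    refine banachLimit_le hL hz fun i => ?_
    simp only [Pi.smul_apply, smul_eq_mul]
    rw [div_eq_inv_mul]
    exact mul_le_mul_of_nonneg_left (winSum_le_winSup hC n i) (by positivity)
  linarith

lemma neg_qfun_le_banachLimit {L : (ℕ → ℝ) → ℝ} (hL : IsBanachLimit L) {x : ℕ → ℝ} {C : ℝ}
    (hC : ∀ k, |x k| ≤ C) : -qfun (-x) ≤ L x := by
  have h1 : L (-x) ≤ qfun (-x) := banachLimit_le_qfun hL (abs_neg_seq hC)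
  have h2 : L (-x) = -L x := by
    have : (-x) = (-1 : ℝ) • x := by ext k; simp
    rw [this, hL.2.1 (-1) x ⟨C, hC⟩]; ring
  linarith


end Lorentz

open Lorentz

/-- Lorentz' criterion: a bounded real sequence is almost convergent iff its
windowed averages `(1/n) ∑_{t=i}^{i+n-1} x(t)` converge to some `c` uniformly
in `i`; and in that case every Banach limit sends `x` to `c`. -/
theorem almostConvergent_iff_uniform_averages (x : ℕ → ℝ) (hx : IsBddSeq x) :
    (AlmostConvergent x ↔
      ∃ c : ℝ, ∀ ε : ℝ, 0 < ε → ∃ N : ℕ, ∀ n ≥ N, ∀ i : ℕ,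
        |(∑ t ∈ Finset.range n, x (i + t)) / n - c| < ε) ∧
    (∀ c : ℝ,
      (∀ ε : ℝ, 0 < ε → ∃ N : ℕ, ∀ n ≥ N, ∀ i : ℕ,
        |(∑ t ∈ Finset.range n, x (i + t)) / n - c| < ε) →
      ∀ L : (ℕ → ℝ) → ℝ, IsBanachLimit L → L x = c) := by
  obtain ⟨C, hC⟩ := hx
  have part2 : ∀ c : ℝ,
      (∀ ε : ℝ, 0 < ε → ∃ N : ℕ, ∀ n ≥ N, ∀ i : ℕ,
        |(∑ t ∈ Finset.range n, x (i + t)) / n - c| < ε) →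
      ∀ L : (ℕ → ℝ) → ℝ, IsBanachLimit L → L x = c := by
    intro c hP L hL
    have key : ∀ ε : ℝ, 0 < ε → |L x - c| ≤ ε := by
      intro ε hε
      obtain ⟨N, hN⟩ := hP ε hε
      set n : ℕ := max N 1 with hn
      have hnN : N ≤ n := le_max_left _ _
      have hn1 : 1 ≤ n := le_max_right _ _
      have hn' : (0:ℝ) < n := by exact_mod_cast hn1
      have havg : ∀ i, |winSum x n i / n - c| < ε := fun i => hN n hnN i
      have hw : IsBddSeq (fun i => winSum x n i) := ⟨C * n, fun i => abs_winSum_le hC n i⟩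
      set z : ℕ → ℝ := (n : ℝ)⁻¹ • fun i => winSum x n i with hz
      have hzv : ∀ i, z i = winSum x n i / n := fun i => by
        simp [hz, div_eq_inv_mul]
      have hzb : IsBddSeq z := ⟨(n:ℝ)⁻¹ * (C * n), fun i => by
        simp only [hz, Pi.smul_apply, smul_eq_mul, abs_mul, abs_inv, Nat.abs_cast]
        exact mul_le_mul_of_nonneg_left (abs_winSum_le hC n i) (by positivity)⟩
      have e1 : L z = L x := by
        rw [hz, hL.2.1 _ _ hw, banachLimit_winSumSeq hL ⟨C, hC⟩ n]
        field_simp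
      have e2 : L z ≤ c + ε := banachLimit_le hL hzb fun i => by
        have := (abs_lt.1 (havg i)).2
        rw [hzv i]; linarith
      have hzb' : IsBddSeq ((-1:ℝ) • z) := by
        obtain ⟨D, hD⟩ := hzb
        exact ⟨D, fun i => by simpa using hD i⟩
      have e3 : L ((-1:ℝ) • z) ≤ -(c - ε) := banachLimit_le hL hzb' fun i => by
        have := (abs_lt.1 (havg i)).1
        simp only [Pi.smul_apply, smul_eq_mul, neg_one_mul]
        rw [hzv i]; linarith
      rw [hL.2.1 (-1) z hzb] at e3
      rw [e1] at e2
      have e4 : c - ε ≤ L x := by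
        have : -L z ≤ -(c - ε) := by linarith
        rw [e1] at this; linarith
      exact abs_le.2 ⟨by linarith, by linarith⟩
    by_contra h
    have hpos : 0 < |L x - c| := abs_pos.2 (sub_ne_zero.2 h)
    have := key (|L x - c| / 2) (by linarith)
    linarith
  refine ⟨⟨?_, fun ⟨c, hP⟩ => ⟨c, part2 c hP⟩⟩, part2⟩
  rintro ⟨c, hc⟩
  have hcombo := qfun_combo hC
  obtain ⟨L1, hL1, hL1x⟩ := exists_banachLimit x ⟨C, hC⟩ (qfun x) le_rfl (by linarith)
  obtain ⟨L2, hL2, hL2x⟩ := exists_banachLimit x ⟨C, hC⟩ (-qfun (-x)) (by linarith) le_rfl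
  have e1 : qfun x = c := by rw [← hL1x]; exact hc L1 hL1
  have e2 : qfun (-x) = -c := by
    have := hc L2 hL2
    rw [hL2x] at this; linarith
  refine ⟨c, fun ε hε => ?_⟩
  have t1 : Tendsto (fun n : ℕ => winSup x n / n) atTop (nhds c) :=
    e1 ▸ tendsto_winSup_div hC
  have t2 : Tendsto (fun n : ℕ => winSup (-x) n / n) atTop (nhds (-c)) :=
    e2 ▸ tendsto_winSup_div (abs_neg_seq hC)
  have ev := (t1.eventually_lt_const (show c < c + ε by linarith)).and
    ((t2.eventually_lt_const (show -c < -c + ε by linarith)).and (eventually_ge_atTop 1))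
  obtain ⟨N, hN⟩ := eventually_atTop.1 ev
  refine ⟨N, fun n hn i => ?_⟩
  obtain ⟨hb1, hb2, hn1⟩ := hN n hn
  have hn' : (0:ℝ) < n := by exact_mod_cast hn1
  have u1 : winSum x n i / n ≤ winSup x n / n := by
    gcongr
    exact winSum_le_winSup hC n i
  have u2 : winSum (-x) n i / n ≤ winSup (-x) n / n := by
    gcongr
    exact winSum_le_winSup (abs_neg_seq hC) n i
  rw [winSum_neg, neg_div] at u2
  have : |winSum x n i / n - c| < ε := abs_lt.2 ⟨by linarith, by linarith⟩
  exact this
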